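/- Let f₁, f₂, f₃ : ℝ³ → ℝ be functions with fⱼ independent of the variable xⱼ, and suppose b₃−b₂, b₁−b₃, b₂−b₁ are all nonzero with (b₃−b₂)f₁ + (b₁−b₃)f₂ + (b₂−b₁)f₃ = 0 identically. Then there exist functions m, n, r of one variable such that (b₃−b₂)f₁(x) = m(x₃) − n(x₂), (b₁−b₃)f₂(x) = r(x₁) − m(x₃), and (b₂−b₁)f₃(x) = n(x₂) − r(x₁) for all x ∈ ℝ³. -/
import Mathlib


theorem cyclic_relation_exact_decomposition
    (b₁ b₂ b₃ : ℝ) (h32 : b₃ - b₂ ≠ 0) (h13 : b₁ - b₃ ≠ 0) (h21 : b₂ - b₁ ≠ 0)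
    (f₁ f₂ f₃ : (Fin 3 → ℝ) → ℝ)
    (hi₁ : ∀ x y : Fin 3 → ℝ, (∀ i, i ≠ 0 → x i = y i) → f₁ x = f₁ y)
    (hi₂ : ∀ x y : Fin 3 → ℝ, (∀ i, i ≠ 1 → x i = y i) → f₂ x = f₂ y)
    (hi₃ : ∀ x y : Fin 3 → ℝ, (∀ i, i ≠ 2 → x i = y i) → f₃ x = f₃ y)
    (hrel : ∀ x, (b₃ - b₂) * f₁ x + (b₁ - b₃) * f₂ x + (b₂ - b₁) * f₃ x = 0) :
    ∃ m n r : ℝ → ℝ, ∀ x : Fin 3 → ℝ,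
      (b₃ - b₂) * f₁ x = m (x 2) - n (x 1) ∧
      (b₁ - b₃) * f₂ x = r (x 0) - m (x 2) ∧
      (b₂ - b₁) * f₃ x = n (x 1) - r (x 0) := by
  set m : ℝ → ℝ := fun c => -((b₁ - b₃) * f₂ ![0, 0, c]) with hm
  set n : ℝ → ℝ := fun b => (b₂ - b₁) * f₃ ![0, b, 0] with hn
  set r : ℝ → ℝ := fun a => n 0 - (b₂ - b₁) * f₃ ![a, 0, 0] with hr
  refine ⟨m, n, r, ?_⟩
  -- key claim: first identity for all x
  have key1 : ∀ x : Fin 3 → ℝ, (b₃ - b₂) * f₁ x = m (x 2) - n (x 1) := by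
    intro x
    have e1 : f₁ x = f₁ ![0, x 1, x 2] := by
      apply hi₁; intro i hi; fin_cases i <;> first | rfl | exact absurd rfl hi
    have e2 : f₂ ![0, x 1, x 2] = f₂ ![0, 0, x 2] := by
      apply hi₂; intro i hi; fin_cases i <;> first | rfl | exact absurd rfl hi
    have e3 : f₃ ![0, x 1, x 2] = f₃ ![0, x 1, 0] := by
      apply hi₃; intro i hi; fin_cases i <;> first | rfl | exact absurd rfl hi
    have h := hrel ![0, x 1, x 2]
    rw [e2, e3] at h
    rw [e1, hm, hn]
    dsimp only
    linarith
  have key2 : ∀ x : Fin 3 → ℝ, (b₁ - b₃) * f₂ x = r (x 0) - m (x 2) := by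
    intro x
    have e1 : f₂ x = f₂ ![x 0, 0, x 2] := by
      apply hi₂; intro i hi; fin_cases i <;> first | rfl | exact absurd rfl hi
    have e2 : f₁ ![x 0, 0, x 2] = f₁ ![0, 0, x 2] := by
      apply hi₁; intro i hi; fin_cases i <;> first | rfl | exact absurd rfl hi
    have e3 : f₃ ![x 0, 0, x 2] = f₃ ![x 0, 0, 0] := by
      apply hi₃; intro i hi; fin_cases i <;> first | rfl | exact absurd rfl hi
    have h := hrel ![x 0, 0, x 2]
    rw [e2, e3] at h
    have h1 := key1 ![0, 0, x 2]
    simp only [Matrix.cons_val_zero, Matrix.cons_val_one, Matrix.head_cons,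
      Matrix.cons_val_two, Matrix.tail_cons] at h1
    rw [e1, hr]
    dsimp only
    linarith
  intro x
  refine ⟨key1 x, key2 x, ?_⟩
  have h := hrel x
  have h1 := key1 x
  have h2 := key2 x
  linarith
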